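/- Let G be a graph and k ≥ 2. The maximum number of vertices of G that can be covered by a union of k matchings equals |V(G)| − max{|S| − k·|N(S)| : S is a stable set of G}. -/

import Mathlib

/-- `M` is a matching of `G`: a set of edges of `G` that are pairwise vertex-disjoint. -/
def IsMatching {V : Type*} (G : SimpleGraph V) (M : Finset (Sym2 V)) : Prop :=
  ↑M ⊆ G.edgeSet ∧ (M : Set (Sym2 V)).Pairwise fun e f => ∀ v : V, ¬(v ∈ e ∧ v ∈ f)

/-- A vertex `v` is covered by an edge set `F` if some edge of `F` is incident to it. -/
def Covers {V : Type*} (F : Finset (Sym2 V)) (v : V) : Prop := ∃ e ∈ F, v ∈ e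

instance {V : Type*} [DecidableEq V] (F : Finset (Sym2 V)) (v : V) : Decidable (Covers F v) :=
  inferInstanceAs (Decidable (∃ e ∈ F, v ∈ e))

/-- A stable (independent) set of vertices. -/
def IsStable {V : Type*} (G : SimpleGraph V) (S : Finset V) : Prop :=
  ∀ u ∈ S, ∀ v ∈ S, ¬ G.Adj u v

/-- The external neighborhood `N(S)`. -/
def nbr {V : Type*} [Fintype V] [DecidableEq V] (G : SimpleGraph V) [DecidableRel G.Adj]
    (S : Finset V) : Finset V :=
  Finset.univ.filter fun w => w ∉ S ∧ ∃ u ∈ S, G.Adj u w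

/-- degree of a vertex in an edge set -/
def degF {V : Type*} [DecidableEq V] (F : Finset (Sym2 V)) (v : V) : ℕ :=
  (F.filter fun e => v ∈ e).card

open Finset in
lemma stable_covered_le {V : Type*} [Fintype V] [DecidableEq V] (G : SimpleGraph V)
    [DecidableRel G.Adj] {k : ℕ} (hk : 2 ≤ k) (M : Fin k → Finset (Sym2 V))
    (hM : ∀ i, IsMatching G (M i)) (S : Finset V) (hS : IsStable G S) :
    (S.filter (fun v => ∃ i, Covers (M i) v)).card ≤ k * (nbr G S).card := by
  classical
  have hex : ∀ v ∈ S.filter (fun v => ∃ i, Covers (M i) v),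
      ∃ p : Fin k × V, p.2 ∈ nbr G S ∧ s(v, p.2) ∈ M p.1 := by
    intro v hv
    rw [Finset.mem_filter] at hv
    obtain ⟨hvS, i, e, he, hve⟩ := hv
    have heE : e ∈ G.edgeSet := (hM i).1 he
    induction e using Sym2.ind with
    | _ a b =>
      have hab : G.Adj a b := G.mem_edgeSet.mp heE
      rcases Sym2.mem_iff.mp hve with rfl | rfl
      · refine ⟨(i, b), ?_, he⟩
        simp only [nbr, Finset.mem_filter, Finset.mem_univ, true_and]
        exact ⟨fun hbS => hS v hvS b hbS hab, v, hvS, hab⟩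
      · refine ⟨(i, a), ?_, by rwa [Sym2.eq_swap]⟩
        simp only [nbr, Finset.mem_filter, Finset.mem_univ, true_and]
        exact ⟨fun haS => hS v hvS a haS hab.symm, v, hvS, hab.symm⟩
  choose F hF1 hF2 using hex
  have hcard := Finset.card_le_card_of_injOn
    (fun v => if h : v ∈ S.filter (fun v => ∃ i, Covers (M i) v) then F v h else (⟨0, by omega⟩, v))
    (s := S.filter (fun v => ∃ i, Covers (M i) v))
    (t := (Finset.univ : Finset (Fin k)) ×ˢ nbr G S) ?_ ?_
  · calc (S.filter (fun v => ∃ i, Covers (M i) v)).card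
        ≤ ((Finset.univ : Finset (Fin k)) ×ˢ nbr G S).card := hcard
      _ = k * (nbr G S).card := by
        rw [Finset.card_product, Finset.card_univ, Fintype.card_fin]
  · intro a ha
    simp only [dif_pos (Finset.mem_coe.mp ha)]
    exact Finset.mem_product.mpr ⟨Finset.mem_univ _, hF1 a ha⟩
  · intro a ha b hb hab
    have haf : a ∈ S.filter (fun v => ∃ i, Covers (M i) v) := ha
    have hbf : b ∈ S.filter (fun v => ∃ i, Covers (M i) v) := hb
    simp only [dif_pos haf, dif_pos hbf] at hab
    have h1 := hF2 a haf
    have h2 := hF2 b hbf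
    rw [hab] at h1
    -- two edges of the same matching share the vertex (F b hbf).2
    have hen : s(a, (F b hbf).2) = s(b, (F b hbf).2) := by
      by_contra hne
      exact (hM (F b hbf).1).2 h1 h2 hne (F b hbf).2 ⟨by simp, by simp⟩
    rcases Sym2.eq_iff.mp hen with ⟨h, -⟩ | ⟨h, h'⟩
    · exact h
    · exfalso
      have hbn := hF1 b hbf
      simp only [nbr, Finset.mem_filter, Finset.mem_univ, true_and] at hbn
      have haS : a ∈ S := (Finset.mem_filter.mp haf).1
      rw [h] at haS
      exact hbn.1 haS

open Finset in
lemma exists_fiber_fun {V : Type*} [Fintype V] [DecidableEq V] (G : SimpleGraph V)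
    [DecidableRel G.Adj] {k : ℕ} (hk : 2 ≤ k) (D : ℕ)
    (hD : ∀ S : Finset V, IsStable G S → S.card - k * (nbr G S).card ≤ D) :
    ∃ (W : Finset V) (f : V → V), Fintype.card V - D ≤ W.card ∧
      (∀ v ∈ W, G.Adj v (f v)) ∧ (∀ c, (W.filter fun v => f v = c).card ≤ k) := by
  classical
  -- the defect bound for arbitrary sets
  have hdef : ∀ A : Finset V, A.card ≤ k * (A.biUnion (fun u => G.neighborFinset u)).card + D := by
    intro A
    set S := A.filter (fun v => ∀ u ∈ A, ¬ G.Adj v u) with hSdef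
    have hSA : S ⊆ A := filter_subset _ _
    have hstab : IsStable G S := fun u hu v hv => (mem_filter.mp hu).2 v (mem_filter.mp hv).1
    have hDS : S.card - k * (nbr G S).card ≤ D := hD S hstab
    set N := A.biUnion (fun u => G.neighborFinset u) with hNdef
    have hsub : (nbr G S) ∪ (A \ S) ⊆ N := by
      intro w hw
      rcases Finset.mem_union.mp hw with hw | hw
      · simp only [nbr, Finset.mem_filter, Finset.mem_univ, true_and] at hw
        obtain ⟨-, u, huS, hadj⟩ := hw
        exact Finset.mem_biUnion.mpr ⟨u, hSA huS, (G.mem_neighborFinset u w).mpr hadj⟩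
      · obtain ⟨hwA, hwS⟩ := mem_sdiff.mp hw
        have : ¬ ∀ u ∈ A, ¬ G.Adj w u := fun h => hwS (mem_filter.mpr ⟨hwA, h⟩)
        push_neg at this
        obtain ⟨u, huA, hadj⟩ := this
        exact Finset.mem_biUnion.mpr ⟨u, huA, (G.mem_neighborFinset u w).mpr hadj.symm⟩
    have hdisj : Disjoint (nbr G S) (A \ S) := by
      rw [Finset.disjoint_left]
      intro w hw hwA
      simp only [nbr, Finset.mem_filter, Finset.mem_univ, true_and] at hw
      obtain ⟨-, u, huS, hadj⟩ := hw
      exact (mem_filter.mp huS).2 w (mem_sdiff.mp hwA).1 hadj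
    have hcards : (nbr G S).card + (A \ S).card ≤ N.card := by
      rw [← Finset.card_union_of_disjoint hdisj]
      exact card_le_card hsub
    have hsplit : (A \ S).card + S.card = A.card := Finset.card_sdiff_add_card_eq_card hSA
    have hkmul : k * (nbr G S).card + k * (A \ S).card ≤ k * N.card := by
      rw [← Nat.mul_add]
      exact Nat.mul_le_mul_left k hcards
    have hk1 : (A \ S).card ≤ k * (A \ S).card := Nat.le_mul_of_pos_left _ (by omega)
    set x1 := k * (nbr G S).card
    set x2 := k * (A \ S).card
    set x3 := k * N.card
    omega
  -- Hall's theorem with D dummy vertices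
  set t : V → Finset ((V × Fin k) ⊕ (Fin D)) := fun v =>
    ((G.neighborFinset v ×ˢ (Finset.univ : Finset (Fin k))).image Sum.inl)
      ∪ ((Finset.univ : Finset (Fin D)).image Sum.inr) with htdef
  have hhall : ∀ s : Finset V, s.card ≤ (s.biUnion t).card := by
    intro s
    rcases s.eq_empty_or_nonempty with rfl | ⟨u₀, hu₀⟩
    · simp
    have hsub : ((s.biUnion (fun u => G.neighborFinset u)) ×ˢ (Finset.univ : Finset (Fin k))).image Sum.inl
        ∪ ((Finset.univ : Finset (Fin D)).image Sum.inr) ⊆ s.biUnion t := by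
      intro x hx
      rcases Finset.mem_union.mp hx with hx | hx
      · obtain ⟨⟨w, i⟩, hp, rfl⟩ := Finset.mem_image.mp hx
        obtain ⟨hw, -⟩ := Finset.mem_product.mp hp
        obtain ⟨u, hus, hwu⟩ := Finset.mem_biUnion.mp hw
        refine Finset.mem_biUnion.mpr ⟨u, hus, ?_⟩
        apply Finset.mem_union_left
        exact Finset.mem_image.mpr ⟨(w, i), Finset.mem_product.mpr ⟨hwu, Finset.mem_univ _⟩, rfl⟩
      · obtain ⟨d, -, rfl⟩ := Finset.mem_image.mp hx
        refine Finset.mem_biUnion.mpr ⟨u₀, hu₀, ?_⟩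
        apply Finset.mem_union_right
        exact Finset.mem_image.mpr ⟨d, Finset.mem_univ _, rfl⟩
    have hdisj2 : Disjoint
        (((s.biUnion (fun u => G.neighborFinset u)) ×ˢ (Finset.univ : Finset (Fin k))).image Sum.inl)
        (((Finset.univ : Finset (Fin D))).image Sum.inr) := by
      rw [Finset.disjoint_left]
      rintro x hx1 hx2
      obtain ⟨p, -, rfl⟩ := Finset.mem_image.mp hx1
      obtain ⟨d, -, h⟩ := Finset.mem_image.mp hx2
      exact (Sum.inl_ne_inr h.symm).elim
    have hcard2 : (((s.biUnion (fun u => G.neighborFinset u)) ×ˢ (Finset.univ : Finset (Fin k))).image Sum.inl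
        ∪ ((Finset.univ : Finset (Fin D)).image Sum.inr)).card
        = k * (s.biUnion (fun u => G.neighborFinset u)).card + D := by
      rw [Finset.card_union_of_disjoint hdisj2,
        Finset.card_image_of_injective _ Sum.inl_injective,
        Finset.card_image_of_injective _ Sum.inr_injective,
        Finset.card_product, Finset.card_univ, Fintype.card_fin, Finset.card_univ,
        Fintype.card_fin, Nat.mul_comm]
    calc s.card ≤ k * (s.biUnion (fun u => G.neighborFinset u)).card + D := hdef s
      _ = _ := hcard2.symm
      _ ≤ (s.biUnion t).card := card_le_card hsub
  obtain ⟨F, hFinj, hFmem⟩ := (Finset.all_card_le_biUnion_card_iff_exists_injective t).mp hhall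
  set W := Finset.univ.filter (fun v : V => (F v).isLeft) with hWdef
  set f : V → V := fun v => Sum.elim Prod.fst (fun _ => v) (F v) with hfdef
  have hWinl : ∀ v ∈ W, ∃ p : V × Fin k, F v = Sum.inl p ∧ p.1 ∈ G.neighborFinset v := by
    intro v hv
    have hleft := (mem_filter.mp hv).2
    obtain ⟨p, hp⟩ := Sum.isLeft_iff.mp hleft
    refine ⟨p, hp, ?_⟩
    have := hFmem v
    rw [hp] at this
    rcases Finset.mem_union.mp this with h | h
    · obtain ⟨q, hq, hqe⟩ := Finset.mem_image.mp h
      obtain rfl : q = p := Sum.inl_injective hqe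
      exact (Finset.mem_product.mp hq).1
    · obtain ⟨d, -, hde⟩ := Finset.mem_image.mp h
      exact (Sum.inr_ne_inl hde).elim
  refine ⟨W, f, ?_, ?_, ?_⟩
  · -- cardinality
    have hinj2 : ((Finset.univ \ W).image F).card = (Finset.univ \ W).card :=
      Finset.card_image_of_injective _ hFinj
    have hsub2 : (Finset.univ \ W).image F ⊆ (Finset.univ : Finset (Fin D)).image Sum.inr := by
      intro x hx
      obtain ⟨v, hv, rfl⟩ := Finset.mem_image.mp hx
      have hnW : v ∉ W := (mem_sdiff.mp hv).2
      have : ¬ (F v).isLeft := fun h => hnW (mem_filter.mpr ⟨Finset.mem_univ _, h⟩)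
      obtain ⟨d, hd⟩ := Sum.isRight_iff.mp (Sum.not_isLeft.mp this)
      rw [hd]
      exact Finset.mem_image.mpr ⟨d, Finset.mem_univ _, rfl⟩
    have h3 : (Finset.univ \ W).card ≤ D := by
      calc (Finset.univ \ W).card = ((Finset.univ \ W).image F).card := hinj2.symm
        _ ≤ ((Finset.univ : Finset (Fin D)).image Sum.inr).card := card_le_card hsub2
        _ ≤ (Finset.univ : Finset (Fin D)).card := Finset.card_image_le
        _ = D := by rw [Finset.card_univ, Fintype.card_fin]
    have h4 : (Finset.univ \ W).card + W.card = Fintype.card V := by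
      rw [Finset.card_sdiff_add_card_eq_card (subset_univ W), Finset.card_univ]
    omega
  · -- adjacency
    intro v hv
    obtain ⟨p, hp, hpn⟩ := hWinl v hv
    have : f v = p.1 := by rw [hfdef]; simp only [hp, Sum.elim_inl]
    rw [this]
    exact (G.mem_neighborFinset v p.1).mp hpn
  · -- fiber sizes
    intro c
    have := Finset.card_le_card_of_injOn
      (fun v => Sum.elim Prod.snd (fun _ => (⟨0, by omega⟩ : Fin k)) (F v))
      (s := W.filter (fun v => f v = c)) (t := (Finset.univ : Finset (Fin k)))
      (fun a _ => Finset.mem_univ _) ?_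
    · calc (W.filter (fun v => f v = c)).card
          ≤ (Finset.univ : Finset (Fin k)).card := this
        _ = k := by rw [Finset.card_univ, Fintype.card_fin]
    · intro a ha b hb hab
      have haf : a ∈ W.filter (fun v => f v = c) := ha
      have hbf : b ∈ W.filter (fun v => f v = c) := hb
      obtain ⟨pa, hpa, -⟩ := hWinl a (Finset.mem_filter.mp haf).1
      obtain ⟨pb, hpb, -⟩ := hWinl b (Finset.mem_filter.mp hbf).1
      have hfa : f a = pa.1 := by rw [hfdef]; simp only [hpa, Sum.elim_inl]
      have hfb : f b = pb.1 := by rw [hfdef]; simp only [hpb, Sum.elim_inl]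
      have hca : pa.1 = c := hfa ▸ (Finset.mem_filter.mp haf).2
      have hcb : pb.1 = c := hfb ▸ (Finset.mem_filter.mp hbf).2
      have hsa : Sum.elim Prod.snd (fun _ => (⟨0, by omega⟩ : Fin k)) (F a) = pa.2 := by
        rw [hpa]; rfl
      have hsb : Sum.elim Prod.snd (fun _ => (⟨0, by omega⟩ : Fin k)) (F b) = pb.2 := by
        rw [hpb]; rfl
      have hab' : Sum.elim Prod.snd (fun _ => (⟨0, by omega⟩ : Fin k)) (F a)
          = Sum.elim Prod.snd (fun _ => (⟨0, by omega⟩ : Fin k)) (F b) := hab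
      rw [hsa, hsb] at hab'
      apply hFinj
      rw [hpa, hpb]
      have : pa = pb := Prod.ext (hca.trans hcb.symm) hab'
      rw [this]

open Finset in
/-- Main construction lemma: if every vertex of `W` can be assigned a neighbour with
multiplicities at most `k`, then `W` is covered by `k` matchings. -/
lemma exists_matchings {V : Type*} [Fintype V] [DecidableEq V] (G : SimpleGraph V)
    [DecidableRel G.Adj] {k : ℕ} (hk : 2 ≤ k) (W : Finset V) :
    ∀ f : V → V, (∀ v ∈ W, G.Adj v (f v)) →
      (∀ c : V, (W.filter fun v => f v = c).card ≤ k) →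
      ∃ M : Fin k → Finset (Sym2 V),
        (∀ i, IsMatching G (M i)) ∧
        (∀ i j, i ≠ j → ∀ e ∈ M i, e ∉ M j) ∧
        (∀ i, ∀ e ∈ M i, ∃ x ∈ W, e = s(x, f x)) ∧
        (∀ v ∈ W, ∃ i, Covers (M i) v) := by
  induction W using Finset.strongInduction with
  | _ W IH =>
  intro f hadj hfib
  classical
  rcases W.eq_empty_or_nonempty with rfl | hWne
  · exact ⟨fun _ => ∅, fun i => ⟨by simp [IsMatching], by simp [IsMatching]⟩,
      by simp, by simp, by simp⟩
  by_cases hout : ∃ v ∈ W, f v ∉ W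
  · -- Case 1 : peel the fiber of an external vertex
    obtain ⟨v₀, hv₀W, hcW⟩ := hout
    set c := f v₀ with hc
    set P := W.filter (fun v => f v = c) with hP
    have hPW : P ⊆ W := filter_subset _ _
    have hv₀P : v₀ ∈ P := by simp [hP, hv₀W, hc]
    set W' := W \ P with hW'
    have hW'ss : W' ⊂ W := Finset.sdiff_ssubset hPW ⟨v₀, hv₀P⟩
    obtain ⟨M, hM, hDisj, hProv, hCov⟩ := IH W' hW'ss f
      (fun v hv => hadj v (mem_sdiff.mp hv).1)
      (fun c' => le_trans (card_le_card (filter_subset_filter _ (sdiff_subset))) (hfib c'))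
    -- facts
    have hcUn : ∀ i, ∀ e ∈ M i, c ∉ e := by
      intro i e he hce
      obtain ⟨x, hx, rfl⟩ := hProv i e he
      have hxW' : x ∈ W' := hx
      rcases Sym2.mem_iff.mp hce with rfl | hfx
      · exact hcW (mem_sdiff.mp hxW').1
      · exact (mem_sdiff.mp hxW').2 (by
          simp only [hP, mem_filter]
          exact ⟨(mem_sdiff.mp hxW').1, hfx.symm⟩)
    set J := P.filter (fun v => ∀ i, ¬ Covers (M i) v) with hJ
    have hJP : J ⊆ P := filter_subset _ _
    have hJUn : ∀ v ∈ J, ∀ i, ∀ e ∈ M i, v ∉ e := by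
      intro v hv i e he hve
      exact (mem_filter.mp hv).2 i ⟨e, he, hve⟩
    have hJk : J.card ≤ k := le_trans (card_le_card hJP) (hfib c)
    have hJadj : ∀ v ∈ J, G.Adj v c := by
      intro v hv
      have hvP := hJP hv
      have := (mem_filter.mp hvP).2
      simpa [this] using hadj v (hPW hvP)
    -- the enumeration of J
    set g : Fin J.card → V := fun i => (J.equivFin.symm i : V) with hg
    have hgJ : ∀ i, g i ∈ J := fun i => (J.equivFin.symm i).2
    have hginj : Function.Injective g := fun a b h => J.equivFin.symm.injective (Subtype.ext h)
    set newE : Fin k → Finset (Sym2 V) := fun i =>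
      if h : (i : ℕ) < J.card then {s(g ⟨i, h⟩, c)} else ∅ with hnewE
    have hnew_mem : ∀ i e, e ∈ newE i → ∃ h : (i : ℕ) < J.card, e = s(g ⟨i, h⟩, c) := by
      intro i e he
      by_cases h : (i : ℕ) < J.card
      · exact ⟨h, by simpa [hnewE, h] using he⟩
      · simp [hnewE, h] at he
    refine ⟨fun i => M i ∪ newE i, ?_, ?_, ?_, ?_⟩
    · -- matchings
      intro i
      constructor
      · intro e he
        rcases Finset.mem_union.mp he with he | he
        · exact (hM i).1 he
        · obtain ⟨h, rfl⟩ := hnew_mem i e he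
          exact G.mem_edgeSet.mpr (hJadj _ (hgJ _))
      · intro e₁ he₁ e₂ he₂ hne x hx
        rcases Finset.mem_union.mp he₁ with h₁ | h₁ <;> rcases Finset.mem_union.mp he₂ with h₂ | h₂
        · exact (hM i).2 h₁ h₂ hne x hx
        · obtain ⟨h, rfl⟩ := hnew_mem i e₂ h₂
          rcases Sym2.mem_iff.mp hx.2 with rfl | rfl
          · exact hJUn _ (hgJ _) i e₁ h₁ hx.1
          · exact hcUn i e₁ h₁ hx.1
        · obtain ⟨h, rfl⟩ := hnew_mem i e₁ h₁
          rcases Sym2.mem_iff.mp hx.1 with rfl | rfl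
          · exact hJUn _ (hgJ _) i e₂ h₂ hx.2
          · exact hcUn i e₂ h₂ hx.2
        · obtain ⟨h, rfl⟩ := hnew_mem i e₁ h₁
          obtain ⟨h', rfl⟩ := hnew_mem i e₂ h₂
          exact hne rfl
    · -- pairwise disjoint
      intro i j hij e he he'
      rcases Finset.mem_union.mp he with h₁ | h₁ <;> rcases Finset.mem_union.mp he' with h₂ | h₂
      · exact hDisj i j hij e h₁ h₂
      · obtain ⟨h, rfl⟩ := hnew_mem j e h₂
        exact hcUn i _ h₁ (by simp)
      · obtain ⟨h, rfl⟩ := hnew_mem i e h₁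
        exact hcUn j _ h₂ (by simp)
      · obtain ⟨h, he1⟩ := hnew_mem i e h₁
        obtain ⟨h', he2⟩ := hnew_mem j e h₂
        rw [he1] at he2
        rcases (Sym2.eq_iff.mp he2) with ⟨hgg, -⟩ | ⟨hgc, -⟩
        · have : (⟨i, h⟩ : Fin J.card) = ⟨j, h'⟩ := hginj hgg
          exact hij (Fin.ext (by simpa using congrArg Fin.val this))
        · exact (G.ne_of_adj (hJadj _ (hgJ _))) hgc
    · -- provenance
      intro i e he
      rcases Finset.mem_union.mp he with h | h
      · obtain ⟨x, hx, rfl⟩ := hProv i e h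
        exact ⟨x, (mem_sdiff.mp hx).1, rfl⟩
      · obtain ⟨hlt, rfl⟩ := hnew_mem i e h
        refine ⟨g ⟨i, hlt⟩, hPW (hJP (hgJ _)), ?_⟩
        have := (mem_filter.mp (hJP (hgJ ⟨i, hlt⟩))).2
        rw [this]
    · -- coverage
      intro v hv
      by_cases hv' : v ∈ W'
      · obtain ⟨i, e, he, hve⟩ := hCov v hv'
        exact ⟨i, e, Finset.mem_union_left _ he, hve⟩
      · have hvP : v ∈ P := by
          by_contra hnp
          exact hv' (mem_sdiff.mpr ⟨hv, hnp⟩)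
        by_cases hcov : ∃ i, Covers (M i) v
        · obtain ⟨i, e, he, hve⟩ := hcov
          exact ⟨i, e, Finset.mem_union_left _ he, hve⟩
        · push_neg at hcov
          have hvJ : v ∈ J := mem_filter.mpr ⟨hvP, fun i hci => hcov i hci⟩
          set idx := J.equivFin ⟨v, hvJ⟩ with hidx
          refine ⟨⟨idx, lt_of_lt_of_le idx.isLt hJk⟩, s(v, c), ?_, by simp⟩
          apply Finset.mem_union_right
          have hlt : ((⟨idx, lt_of_lt_of_le idx.isLt hJk⟩ : Fin k) : ℕ) < J.card := idx.isLt
          have hgv : g ⟨(⟨idx, lt_of_lt_of_le idx.isLt hJk⟩ : Fin k), hlt⟩ = v := by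
            have : (⟨((⟨idx, lt_of_lt_of_le idx.isLt hJk⟩ : Fin k) : ℕ), hlt⟩ : Fin J.card) = idx := by
              apply Fin.ext; simp
            rw [hg, this, hidx]
            simp
          simp [hnewE, hlt, hgv]
  · -- Case 2 : W is closed under f; peel a cycle
    push_neg at hout
    obtain ⟨z₀, hz₀⟩ := hWne
    have key : ∃ z ∈ W, ∃ q, 0 < q ∧ f^[q] z = z := by
      have horb0 : ∀ j, f^[j] z₀ ∈ W := by
        intro j; induction j with
        | zero => simpa using hz₀
        | succ j ih => rw [Function.iterate_succ_apply']; exact hout _ ih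
      obtain ⟨a, b, hab, heq'⟩ := Finite.exists_ne_map_eq_of_infinite (fun j : ℕ => f^[j] z₀)
      have heq : f^[a] z₀ = f^[b] z₀ := heq'
      rcases hab.lt_or_gt with h | h
      · refine ⟨f^[a] z₀, horb0 a, b - a, by omega, ?_⟩
        rw [← Function.iterate_add_apply]
        have hba : b - a + a = b := by omega
        rw [hba]; exact heq.symm
      · refine ⟨f^[b] z₀, horb0 b, a - b, by omega, ?_⟩
        rw [← Function.iterate_add_apply]
        have hba : a - b + b = a := by omega
        rw [hba]; exact heq
    obtain ⟨z, hzW, hexq⟩ := key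
    have H : ∃ q, 0 < q ∧ f^[q] z = z := hexq
    set m := Nat.find H with hmdef
    have hm : 0 < m ∧ f^[m] z = z := Nat.find_spec H
    have hminm : ∀ q' < m, ¬(0 < q' ∧ f^[q'] z = z) := fun q' h => Nat.find_min H h
    have horbW : ∀ j, f^[j] z ∈ W := by
      intro j; induction j with
      | zero => simpa using hzW
      | succ j ih => rw [Function.iterate_succ_apply']; exact hout _ ih
    have hm2 : 2 ≤ m := by
      by_contra hcon
      have hm1 : m = 1 := by omega
      have : f z = z := by
        have := hm.2; rw [hm1] at this; simpa using this
      have hadjz := hadj z hzW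
      rw [this] at hadjz
      exact G.irrefl hadjz
    have hmodz : ∀ j, f^[j] z = f^[j % m] z := by
      intro j
      conv_lhs => rw [← Nat.mod_add_div j m]
      rw [Function.iterate_add_apply, Function.iterate_mul,
        Function.iterate_fixed hm.2 (j / m)]
    have hinj : ∀ ⦃i⦄, i < m → ∀ ⦃j⦄, j < m → f^[i] z = f^[j] z → i = j := by
      have key2 : ∀ i j, i < j → j < m → f^[i] z ≠ f^[j] z := by
        intro i j hij hjm hne
        apply hminm (m - j + i) (by omega)
        refine ⟨by omega, ?_⟩
        rw [Function.iterate_add_apply, hne, ← Function.iterate_add_apply]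
        have hmj : m - j + j = m := by omega
        rw [hmj, hm.2]
      intro i hi j hj hij
      rcases lt_trichotomy i j with h | h | h
      · exact absurd hij (key2 i j h hj)
      · exact h
      · exact absurd hij.symm (key2 j i h hi)
    set Z := (Finset.range m).image (fun j => f^[j] z) with hZdef
    have hZW : Z ⊆ W := by
      intro x hx
      obtain ⟨j, -, rfl⟩ := Finset.mem_image.mp hx
      exact horbW j
    have hzZ : z ∈ Z := Finset.mem_image.mpr ⟨0, Finset.mem_range.mpr hm.1, rfl⟩
    have hZcard : Z.card = m := by
      rw [hZdef, Finset.card_image_of_injOn, Finset.card_range]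
      intro a ha b hb hab
      exact hinj (Finset.mem_range.mp (Finset.mem_coe.mp ha))
        (Finset.mem_range.mp (Finset.mem_coe.mp hb)) hab
    set W' := W \ Z with hW'def
    have hss : W' ⊂ W := Finset.sdiff_ssubset hZW ⟨z, hzZ⟩
    obtain ⟨M, hM, hDisj, hProv, hCov⟩ := IH W' hss f
      (fun v hv => hadj v (mem_sdiff.mp hv).1)
      (fun c' => le_trans (card_le_card (filter_subset_filter _ (sdiff_subset))) (hfib c'))
    set touched : V → Prop := fun x => ∃ i, Covers (M i) x with htouched
    -- rebase the cycle at a touched vertex if one exists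
    obtain ⟨z', hz'per, hz'inj, hz'img, hbase⟩ :
        ∃ z', f^[m] z' = z' ∧
          (∀ ⦃i⦄, i < m → ∀ ⦃j⦄, j < m → f^[i] z' = f^[j] z' → i = j) ∧
          (Finset.range m).image (fun j => f^[j] z') = Z ∧
          (touched z' ∨ ∀ x ∈ Z, ¬ touched x) := by
      by_cases hT : ∃ x ∈ Z, touched x
      · obtain ⟨t, htZ, htt⟩ := hT
        obtain ⟨j₀, hj₀m, rfl⟩ : ∃ j₀ < m, f^[j₀] z = t := by
          obtain ⟨j₀, hj₀, rfl⟩ := Finset.mem_image.mp htZ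
          exact ⟨j₀, Finset.mem_range.mp hj₀, rfl⟩
        have hrot : ∀ jj, f^[jj] (f^[j₀] z) = f^[(jj + j₀) % m] z := by
          intro jj
          rw [← Function.iterate_add_apply, ← hmodz]
        refine ⟨f^[j₀] z, ?_, ?_, ?_, Or.inl htt⟩
        · rw [hrot m, ← hmodz, Nat.add_comm, Function.iterate_add_apply, hm.2]
        · intro i hi j hj hij
          rw [hrot i, hrot j] at hij
          have hmods : (i + j₀) % m = (j + j₀) % m :=
            hinj (Nat.mod_lt _ hm.1) (Nat.mod_lt _ hm.1) hij
          have : i % m = j % m := Nat.ModEq.add_right_cancel' j₀ hmods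
          rwa [Nat.mod_eq_of_lt hi, Nat.mod_eq_of_lt hj] at this
        · apply Finset.eq_of_subset_of_card_le
          · intro x hx
            obtain ⟨j, hj, rfl⟩ := Finset.mem_image.mp hx
            rw [hrot j]
            exact Finset.mem_image.mpr ⟨(j + j₀) % m,
              Finset.mem_range.mpr (Nat.mod_lt _ hm.1), rfl⟩
          · rw [hZcard]
            rw [Finset.card_image_of_injOn]
            · simp
            · intro a ha b hb hab
              have hab' : f^[a] (f^[j₀] z) = f^[b] (f^[j₀] z) := hab
              rw [hrot a, hrot b] at hab'
              have hmods : (a + j₀) % m = (b + j₀) % m :=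
                hinj (Nat.mod_lt _ hm.1) (Nat.mod_lt _ hm.1) hab'
              have : a % m = b % m := Nat.ModEq.add_right_cancel' j₀ hmods
              rwa [Nat.mod_eq_of_lt (Finset.mem_range.mp (Finset.mem_coe.mp ha)),
                Nat.mod_eq_of_lt (Finset.mem_range.mp (Finset.mem_coe.mp hb))] at this
      · push_neg at hT
        exact ⟨z, hm.2, hinj, rfl, Or.inr hT⟩
    set v : ℕ → V := fun j => f^[j] z' with hvdef
    have hvsucc : ∀ j, f (v j) = v (j + 1) := fun j =>
      (Function.iterate_succ_apply' f j z').symm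
    have hmod' : ∀ j, v j = v (j % m) := by
      intro j
      show f^[j] z' = f^[j % m] z'
      conv_lhs => rw [← Nat.mod_add_div j m]
      rw [Function.iterate_add_apply, Function.iterate_mul,
        Function.iterate_fixed hz'per (j / m)]
    have hvZ : ∀ j, v j ∈ Z := by
      intro j
      rw [hmod' j, ← hz'img]
      exact Finset.mem_image.mpr ⟨j % m, Finset.mem_range.mpr (Nat.mod_lt _ hm.1), rfl⟩
    have hvW : ∀ j, v j ∈ W := fun j => hZW (hvZ j)
    have hvadj : ∀ j, G.Adj (v j) (v (j + 1)) := by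
      intro j
      have := hadj (v j) (hvW j)
      rwa [hvsucc j] at this
    have hvm : v m = v 0 := hz'per
    -- indices in [1, m] are uniquely determined
    have hmodeq : ∀ a b, 1 ≤ a → a ≤ m → 1 ≤ b → b ≤ m → v a = v b → a = b := by
      intro a b h1 h2 h3 h4 hab
      rw [hmod' a, hmod' b] at hab
      have := hz'inj (Nat.mod_lt _ hm.1) (Nat.mod_lt _ hm.1) hab
      rcases Nat.lt_or_ge a m with ha | ha
      · rcases Nat.lt_or_ge b m with hb | hb
        · rwa [Nat.mod_eq_of_lt ha, Nat.mod_eq_of_lt hb] at this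
        · have hbm : b = m := by omega
          rw [Nat.mod_eq_of_lt ha, hbm, Nat.mod_self] at this
          omega
      · have ham : a = m := by omega
        rcases Nat.lt_or_ge b m with hb | hb
        · rw [ham, Nat.mod_self, Nat.mod_eq_of_lt hb] at this
          omega
        · omega
    have hunt : ∀ x, ¬ touched x → ∀ i, ∀ e ∈ M i, x ∉ e := by
      intro x hx i e he hxe
      exact hx ⟨i, e, he, hxe⟩
    -- existence of a free colour at every cycle vertex
    have hfree : ∀ j, ∃ i : Fin k, ∀ e ∈ M i, v j ∉ e := by
      intro j
      have hpt : f (v (j + (m - 1))) = v j := by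
        rw [hvsucc]
        have h1 : j + (m - 1) + 1 = j + m := by omega
        rw [h1, hmod' (j + m), hmod' j, Nat.add_mod_right]
      have hpZ : v (j + (m - 1)) ∈ Z := hvZ _
      have hsub : W'.filter (fun x => f x = v j) ⊂ W.filter (fun x => f x = v j) := by
        rw [Finset.ssubset_iff_of_subset (filter_subset_filter _ sdiff_subset)]
        refine ⟨v (j + (m - 1)), mem_filter.mpr ⟨hvW _, hpt⟩, fun hcon => ?_⟩
        exact (mem_sdiff.mp (mem_filter.mp hcon).1).2 hpZ
      have hcard : (W'.filter (fun x => f x = v j)).card < k :=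
        lt_of_lt_of_le (Finset.card_lt_card hsub) (hfib (v j))
      set blocked := (Finset.univ : Finset (Fin k)).filter
        (fun i => ∃ e ∈ M i, v j ∈ e) with hbl
      have hx : ∀ i ∈ blocked, ∃ x, x ∈ W'.filter (fun y => f y = v j) ∧ s(x, f x) ∈ M i := by
        intro i hi
        obtain ⟨e, he, hte⟩ := (mem_filter.mp hi).2
        obtain ⟨x, hxW', hex⟩ := hProv i e he
        have hfx : f x = v j := by
          subst hex
          rcases Sym2.mem_iff.mp hte with h | h
          · exact absurd (hvZ j) (h ▸ (mem_sdiff.mp hxW').2)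
          · exact h.symm
        exact ⟨x, mem_filter.mpr ⟨hxW', hfx⟩, hex ▸ he⟩
      choose gx hgx1 hgx2 using hx
      have hble : blocked.card ≤ (W'.filter (fun x => f x = v j)).card := by
        apply Finset.card_le_card_of_injOn
          (fun i => if h : i ∈ blocked then gx i h else v j) ?_ ?_
        · intro i hi
          simp only [dif_pos (Finset.mem_coe.mp hi)]
          exact hgx1 i hi
        · intro i hi i' hi' hgg
          have hib : i ∈ blocked := hi
          have hib' : i' ∈ blocked := hi'
          simp only [dif_pos hib, dif_pos hib'] at hgg
          by_contra hne
          have h1 := hgx2 i hib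
          have h2 := hgx2 i' hib'
          rw [hgg] at h1
          exact hDisj i i' hne _ h1 h2
      have hne : ∃ i : Fin k, i ∉ blocked := by
        by_contra hc
        push_neg at hc
        have hsub2 : (Finset.univ : Finset (Fin k)) ⊆ blocked := fun i _ => hc i
        have := Finset.card_le_card hsub2
        rw [Finset.card_univ, Fintype.card_fin] at this
        omega
      obtain ⟨i, hi⟩ := hne
      refine ⟨i, fun e he hte => hi ?_⟩
      exact mem_filter.mpr ⟨Finset.mem_univ _, e, he, hte⟩
    -- the alternating predicate
    set B : ℕ → Prop :=
      fun j => Nat.rec False (fun jj bjj => ¬ touched (v (jj + 1)) ∧ ¬ bjj) j with hBdef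
    have hB0 : ¬ B 0 := fun h => h
    have hBs : ∀ j, B (j + 1) ↔ (¬ touched (v (j + 1)) ∧ ¬ B j) := fun j => Iff.rfl
    have hBunt : ∀ j, B j → ¬ touched (v j) := by
      intro j
      cases j with
      | zero => exact fun h => absurd h hB0
      | succ j => exact fun h => h.1
    set Jset := (Finset.range m).filter (fun j => 1 ≤ j ∧ B j) with hJsetdef
    have hJmem : ∀ j ∈ Jset, 1 ≤ j ∧ j < m ∧ B j := by
      intro j hj
      obtain ⟨h1, h2⟩ := mem_filter.mp hj
      exact ⟨h2.1, Finset.mem_range.mp h1, h2.2⟩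
    set col : ℕ → Fin k := fun j =>
      if h : touched (v (j + 1)) then (hfree (j + 1)).choose else ⟨0, by omega⟩ with hcoldef
    have hcolspec : ∀ j, touched (v (j + 1)) → ∀ e ∈ M (col j), v (j + 1) ∉ e := by
      intro j ht
      simp only [hcoldef, dif_pos ht]
      exact (hfree (j + 1)).choose_spec
    have hcol0 : ∀ j, ¬ touched (v (j + 1)) → col j = ⟨0, by omega⟩ := by
      intro j ht
      simp only [hcoldef, dif_neg ht]
    set spc : Prop := ¬ touched (v 0) ∧ ¬ B (m - 1) with hspcdef
    set one : Fin k := ⟨1, by omega⟩ with honedef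
    set M'' : Fin k → Finset (Sym2 V) := fun i =>
      (M i ∪ (Jset.filter (fun j => col j = i)).image (fun j => s(v j, v (j + 1))))
        ∪ (if spc ∧ i = one then {s(v 0, v 1)} else ∅) with hM''def
    -- basic classification
    have hmem'' : ∀ i e, e ∈ M'' i →
        e ∈ M i ∨ (∃ j ∈ Jset, col j = i ∧ e = s(v j, v (j + 1)))
          ∨ (spc ∧ i = one ∧ e = s(v 0, v 1)) := by
      intro i e he
      rcases Finset.mem_union.mp he with he | he
      · rcases Finset.mem_union.mp he with he | he
        · exact Or.inl he
        · obtain ⟨j, hj, rfl⟩ := Finset.mem_image.mp he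
          exact Or.inr (Or.inl ⟨j, (mem_filter.mp hj).1, (mem_filter.mp hj).2, rfl⟩)
      · by_cases h : spc ∧ i = one
        · simp only [if_pos h, Finset.mem_singleton] at he
          exact Or.inr (Or.inr ⟨h.1, h.2, he⟩)
        · simp [if_neg h] at he
    -- disjointness of distinct added edges
    have hedisj : ∀ j ∈ Jset, ∀ j' ∈ Jset, j ≠ j' → ∀ x : V,
        x ∈ (s(v j, v (j + 1)) : Sym2 V) → x ∈ (s(v j', v (j' + 1)) : Sym2 V) → False := by
      intro j hj j' hj' hne x hx hx'
      obtain ⟨hj1, hjm, hjB⟩ := hJmem j hj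
      obtain ⟨hj1', hjm', hjB'⟩ := hJmem j' hj'
      rcases Sym2.mem_iff.mp hx with rfl | rfl <;> rcases Sym2.mem_iff.mp hx' with h | h
      · exact hne (hmodeq j j' hj1 (by omega) hj1' (by omega) h)
      · have : j = j' + 1 := hmodeq j (j' + 1) hj1 (by omega) (by omega) (by omega) h
        subst this
        exact ((hBs j').mp hjB).2 hjB'
      · have : j + 1 = j' := hmodeq (j + 1) j' (by omega) (by omega) hj1' (by omega) h
        rw [← this] at hjB'
        exact ((hBs j).mp hjB').2 hjB
      · have : j + 1 = j' + 1 :=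
          hmodeq (j + 1) (j' + 1) (by omega) (by omega) (by omega) (by omega) h
        omega
    have hJun : ∀ j ∈ Jset, ¬ touched (v j) := fun j hj => hBunt j (hJmem j hj).2.2
    have haddedNM : ∀ j ∈ Jset, ∀ i, s(v j, v (j + 1)) ∉ M i := by
      intro j hj i hmem
      exact hJun j hj ⟨i, _, hmem, by simp⟩
    have hspecAll : spc → ∀ x ∈ Z, ¬ touched x := by
      intro hs x hx
      rcases hbase with h | h
      · exact absurd h hs.1
      · exact h x hx
    have hspecNM : spc → ∀ i, s(v 0, v 1) ∉ M i := by
      intro hs i hmem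
      exact hspecAll hs (v 0) (hvZ 0) ⟨i, _, hmem, by simp⟩
    have hspecne : spc → ∀ j ∈ Jset, s(v 0, v 1) ≠ s(v j, v (j + 1)) := by
      intro hs j hj heq
      obtain ⟨hj1, hjm, hjB⟩ := hJmem j hj
      have hv0m : v 0 = v m := hvm.symm
      rcases Sym2.eq_iff.mp heq with ⟨h1, h2⟩ | ⟨h1, h2⟩
      · rw [hv0m] at h1
        have := hmodeq m j (by omega) le_rfl hj1 (by omega) h1
        omega
      · have hj1' : 1 = j := hmodeq 1 j (by omega) (by omega) hj1 (by omega) h2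
        rw [hv0m] at h1
        have := hmodeq m (j + 1) (by omega) le_rfl (by omega) (by omega) h1
        have hjm1 : j = m - 1 := by omega
        rw [hjm1] at hjB
        exact hs.2 hjB
    -- conclusion
    refine ⟨M'', ?_, ?_, ?_, ?_⟩
    · -- matchings
      intro i
      constructor
      · intro e he
        rcases hmem'' i e (by simpa using he) with h | ⟨j, hj, -, rfl⟩ | ⟨-, -, rfl⟩
        · exact (hM i).1 h
        · exact G.mem_edgeSet.mpr (hvadj j)
        · exact G.mem_edgeSet.mpr (hvadj 0)
      · intro e₁ he₁ e₂ he₂ hne x hx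
        simp only [Finset.mem_coe] at he₁ he₂
        obtain ⟨hx1, hx2⟩ := hx
        rcases hmem'' i e₁ he₁ with h₁ | ⟨j, hj, hcj, rfl⟩ | ⟨hs, hio, rfl⟩ <;>
          rcases hmem'' i e₂ he₂ with h₂ | ⟨j', hj', hcj', rfl⟩ | ⟨hs', hio', rfl⟩
        · exact (hM i).2 h₁ h₂ hne x ⟨hx1, hx2⟩
        · rcases Sym2.mem_iff.mp hx2 with rfl | rfl
          · exact hunt _ (hJun j' hj') i e₁ h₁ hx1
          · by_cases ht : touched (v (j' + 1))
            · exact hcolspec j' ht e₁ (hcj' ▸ h₁) hx1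
            · exact hunt _ ht i e₁ h₁ hx1
        · rcases Sym2.mem_iff.mp hx2 with rfl | rfl
          · exact hunt _ (hspecAll hs' _ (hvZ 0)) i e₁ h₁ hx1
          · exact hunt _ (hspecAll hs' _ (hvZ 1)) i e₁ h₁ hx1
        · rcases Sym2.mem_iff.mp hx1 with rfl | rfl
          · exact hunt _ (hJun j hj) i e₂ h₂ hx2
          · by_cases ht : touched (v (j + 1))
            · exact hcolspec j ht e₂ (hcj ▸ h₂) hx2
            · exact hunt _ ht i e₂ h₂ hx2
        · rcases eq_or_ne j j' with rfl | hjj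
          · exact hne rfl
          · exact hedisj j hj j' hj' hjj x hx1 hx2
        · -- added vs special within colour i : impossible since col j = 0 ≠ 1 under spc
          have h0 : col j = ⟨0, by omega⟩ :=
            hcol0 j (hspecAll hs' _ (hvZ (j + 1)))
          rw [hio', honedef] at hcj
          rw [h0] at hcj
          have := congrArg Fin.val hcj
          simp at this
        · rcases Sym2.mem_iff.mp hx1 with rfl | rfl
          · exact hunt _ (hspecAll hs _ (hvZ 0)) i e₂ h₂ hx2
          · exact hunt _ (hspecAll hs _ (hvZ 1)) i e₂ h₂ hx2
        · have h0 : col j' = ⟨0, by omega⟩ :=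
            hcol0 j' (hspecAll hs _ (hvZ (j' + 1)))
          rw [hio, honedef] at hcj'
          rw [h0] at hcj'
          have := congrArg Fin.val hcj'
          simp at this
        · exact hne rfl
    · -- pairwise disjoint colours
      intro i i' hii e he he'
      have H1 := hmem'' i e he
      have H2 := hmem'' i' e he'
      rcases H1 with h₁ | ⟨j, hj, hcj, rfl⟩ | ⟨hs, hio, rfl⟩ <;>
        rcases H2 with h₂ | ⟨j', hj', hcj', heq⟩ | ⟨hs', hio', heq⟩
      · exact hDisj i i' hii e h₁ h₂
      · exact haddedNM j' hj' i (heq ▸ h₁)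
      · exact hspecNM hs' i (heq ▸ h₁)
      · exact haddedNM j hj i' h₂
      · rcases eq_or_ne j j' with rfl | hjj
        · exact hii (hcj ▸ hcj' ▸ rfl)
        · exact hedisj j hj j' hj' hjj (v j) (by simp) (heq ▸ (by simp : v j ∈ (s(v j, v (j+1)) : Sym2 V)))
      · exact hspecne hs' j hj heq.symm
      · exact hspecNM hs i' h₂
      · exact hspecne hs j' hj' heq
      · exact hii (hio ▸ hio' ▸ rfl)
    · -- provenance
      intro i e he
      rcases hmem'' i e he with h | ⟨j, hj, -, rfl⟩ | ⟨-, -, rfl⟩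
      · obtain ⟨x, hx, rfl⟩ := hProv i e h
        exact ⟨x, (mem_sdiff.mp hx).1, rfl⟩
      · exact ⟨v j, hvW j, by rw [hvsucc j]⟩
      · exact ⟨v 0, hvW 0, by rw [hvsucc 0]⟩
    · -- coverage
      intro w hw
      by_cases hw' : w ∈ W'
      · obtain ⟨i, e, he, hwe⟩ := hCov w hw'
        exact ⟨i, e, by simp [hM''def, Finset.mem_union, he], hwe⟩
      · have hwZ : w ∈ Z := by
          by_contra hnz
          exact hw' (mem_sdiff.mpr ⟨hw, hnz⟩)
        by_cases ht : touched w
        · obtain ⟨i, e, he, hwe⟩ := ht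
          exact ⟨i, e, by simp [hM''def, Finset.mem_union, he], hwe⟩
        · obtain ⟨l, hl, rfl⟩ : ∃ l < m, v l = w := by
            rw [← hz'img] at hwZ
            obtain ⟨l, hl, rfl⟩ := Finset.mem_image.mp hwZ
            exact ⟨l, Finset.mem_range.mp hl, rfl⟩
          cases l with
          | zero =>
            by_cases hBm : B (m - 1)
            · have hJm : m - 1 ∈ Jset :=
                mem_filter.mpr ⟨Finset.mem_range.mpr (by omega), by omega, hBm⟩
              refine ⟨col (m - 1), s(v (m - 1), v (m - 1 + 1)), ?_, ?_⟩
              · apply Finset.mem_union_left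
                apply Finset.mem_union_right
                exact Finset.mem_image.mpr ⟨m - 1, mem_filter.mpr ⟨hJm, rfl⟩, rfl⟩
              · have hmm : m - 1 + 1 = m := by omega
                rw [hmm, hvm]
                simp
            · have hspc : spc := ⟨ht, hBm⟩
              refine ⟨one, s(v 0, v 1), ?_, by simp⟩
              apply Finset.mem_union_right
              rw [if_pos ⟨hspc, rfl⟩]
              simp
          | succ l' =>
            by_cases hBl : B (l' + 1)
            · have hJl : l' + 1 ∈ Jset :=
                mem_filter.mpr ⟨Finset.mem_range.mpr hl, by omega, hBl⟩
              refine ⟨col (l' + 1), s(v (l' + 1), v (l' + 1 + 1)), ?_, by simp⟩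
              apply Finset.mem_union_left
              apply Finset.mem_union_right
              exact Finset.mem_image.mpr ⟨l' + 1, mem_filter.mpr ⟨hJl, rfl⟩, rfl⟩
            · have hBl' : B l' := by
                by_contra h
                exact hBl ((hBs l').mpr ⟨ht, h⟩)
              have hl'1 : 1 ≤ l' := by
                by_contra h
                have : l' = 0 := by omega
                rw [this] at hBl'
                exact hB0 hBl'
              have hJl : l' ∈ Jset :=
                mem_filter.mpr ⟨Finset.mem_range.mpr (by omega), hl'1, hBl'⟩
              refine ⟨col l', s(v l', v (l' + 1)), ?_, by simp⟩
              apply Finset.mem_union_left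
              apply Finset.mem_union_right
              exact Finset.mem_image.mpr ⟨l', mem_filter.mpr ⟨hJl, rfl⟩, rfl⟩

theorem stmt_4 {V : Type*} [Fintype V] [DecidableEq V] (G : SimpleGraph V) [DecidableRel G.Adj]
    (k : ℕ) (hk : 2 ≤ k) :
    sSup {n : ℕ | ∃ M : Fin k → Finset (Sym2 V), (∀ i, IsMatching G (M i)) ∧
        n = (Finset.univ.filter fun v : V => ∃ i, Covers (M i) v).card} =
      Fintype.card V -
        sSup {d : ℕ | ∃ S : Finset V, IsStable G S ∧ d = S.card - k * (nbr G S).card} := by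
  classical
  have hB0 : (0 : ℕ) ∈ {d : ℕ | ∃ S : Finset V, IsStable G S ∧ d = S.card - k * (nbr G S).card} :=
    ⟨∅, fun u hu => absurd hu (Finset.notMem_empty u), by simp⟩
  have hBbdd : BddAbove {d : ℕ | ∃ S : Finset V, IsStable G S ∧ d = S.card - k * (nbr G S).card} := by
    refine ⟨Fintype.card V, ?_⟩
    rintro d ⟨S, -, rfl⟩
    exact le_trans (Nat.sub_le _ _) (by simpa using Finset.card_le_univ S)
  set D := sSup {d : ℕ | ∃ S : Finset V, IsStable G S ∧ d = S.card - k * (nbr G S).card} with hD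
  have hDmem : D ∈ {d : ℕ | ∃ S : Finset V, IsStable G S ∧ d = S.card - k * (nbr G S).card} :=
    Nat.sSup_mem ⟨0, hB0⟩ hBbdd
  obtain ⟨SD, hSDstable, hSDeq⟩ := hDmem
  have hA0 : (0 : ℕ) ∈ {n : ℕ | ∃ M : Fin k → Finset (Sym2 V), (∀ i, IsMatching G (M i)) ∧
      n = (Finset.univ.filter fun v : V => ∃ i, Covers (M i) v).card} :=
    ⟨fun _ => ∅, fun i => ⟨by simp, by simp⟩, by simp [Covers]⟩
  have hAbdd : BddAbove {n : ℕ | ∃ M : Fin k → Finset (Sym2 V), (∀ i, IsMatching G (M i)) ∧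
      n = (Finset.univ.filter fun v : V => ∃ i, Covers (M i) v).card} := by
    refine ⟨Fintype.card V, ?_⟩
    rintro a ⟨M, -, rfl⟩
    exact le_trans (Finset.card_filter_le _ _) (le_of_eq Finset.card_univ)
  apply le_antisymm
  · apply csSup_le ⟨0, hA0⟩
    rintro a ⟨M, hM, rfl⟩
    have h1 := stable_covered_le G hk M hM SD hSDstable
    have e1 : (SD.filter (fun v => ∃ i, Covers (M i) v)).card
        + (SD.filter (fun v => ¬ ∃ i, Covers (M i) v)).card = SD.card :=
      Finset.card_filter_add_card_filter_not _
    have e2 : (Finset.univ.filter (fun v : V => ∃ i, Covers (M i) v)).card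
        + (Finset.univ.filter (fun v : V => ¬ ∃ i, Covers (M i) v)).card = Fintype.card V := by
      rw [Finset.card_filter_add_card_filter_not, Finset.card_univ]
    have e3 : (SD.filter (fun v => ¬ ∃ i, Covers (M i) v)).card
        ≤ (Finset.univ.filter (fun v : V => ¬ ∃ i, Covers (M i) v)).card :=
      Finset.card_le_card (Finset.filter_subset_filter _ (Finset.subset_univ SD))
    set x := k * (nbr G SD).card
    omega
  · have hDub : ∀ S : Finset V, IsStable G S → S.card - k * (nbr G S).card ≤ D :=
      fun S hS => le_csSup hBbdd ⟨S, hS, rfl⟩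
    obtain ⟨W, f, hWcard, hWadj, hWfib⟩ := exists_fiber_fun G hk D hDub
    obtain ⟨M, hMm, -, -, hMcov⟩ := exists_matchings G hk W f hWadj hWfib
    have hmem : (Finset.univ.filter fun v : V => ∃ i, Covers (M i) v).card ∈
        {n : ℕ | ∃ M : Fin k → Finset (Sym2 V), (∀ i, IsMatching G (M i)) ∧
          n = (Finset.univ.filter fun v : V => ∃ i, Covers (M i) v).card} :=
      ⟨M, hMm, rfl⟩
    have hle : W.card ≤ (Finset.univ.filter fun v : V => ∃ i, Covers (M i) v).card := by
      apply Finset.card_le_card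
      intro v hv
      exact Finset.mem_filter.mpr ⟨Finset.mem_univ _, hMcov v hv⟩
    calc Fintype.card V - D ≤ W.card := hWcard
      _ ≤ (Finset.univ.filter fun v : V => ∃ i, Covers (M i) v).card := hle
      _ ≤ _ := le_csSup hAbdd hmem
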